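/- Any loop-free FMC term M that is typed in the empty context, ⊢ M : !!s => !!t_I, where the type is zero-free (every sum type occurring in it is indexed by a nonempty finite set of choices), is terminating: there exist memories S_A, T_A and a choice i such that (S_A, M) ⇓ (T_A, i). -/

import Mathlib

variable {Loc Ch : Type}

/-- FMC terms: variable, push `[N]a.M`, pop `a<x>.M` (de Bruijn binder),
choice `i`, case `M ; i -> N`, and loop `M^i`. -/
inductive Tm (Loc Ch : Type) : Type where
  | var : ℕ → Tm Loc Ch
  | push : Tm Loc Ch → Loc → Tm Loc Ch → Tm Loc Ch
  | pop : Loc → Tm Loc Ch → Tm Loc Ch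
  | choice : Ch → Tm Loc Ch
  | caseOf : Tm Loc Ch → Ch → Tm Loc Ch → Tm Loc Ch
  | loop : Tm Loc Ch → Ch → Tm Loc Ch

namespace Tm

/-- Shift the free de Bruijn indices `≥ d` up by one. -/
def lift : Tm Loc Ch → ℕ → Tm Loc Ch
  | var n, d => if n < d then var n else var (n + 1)
  | push N a M, d => push (N.lift d) a (M.lift d)
  | pop a M, d => pop a (M.lift (d + 1))
  | choice i, _ => choice i
  | caseOf M i N, d => caseOf (M.lift d) i (N.lift d)
  | loop M i, d => loop (M.lift d) i

/-- Capture-avoiding substitution `{N/k}M` for the de Bruijn index `k`. -/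
def subst : Tm Loc Ch → ℕ → Tm Loc Ch → Tm Loc Ch
  | var n, k, N => if n = k then N else if n < k then var n else var (n - 1)
  | push P a M, k, N => push (P.subst k N) a (M.subst k N)
  | pop a M, k, N => pop a (M.subst (k + 1) (N.lift 0))
  | choice i, _, _ => choice i
  | caseOf M i P, k, N => caseOf (M.subst k N) i (P.subst k N)
  | loop M i, k, N => loop (M.subst k N) i

end Tm

/-- A term is loop-free if it contains no subterm of the form `M^i`. -/
def Tm.loopFree : Tm Loc Ch → Prop
  | .var _ => True
  | .push N _ M => N.loopFree ∧ M.loopFree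
  | .pop _ M => M.loopFree
  | .choice _ => True
  | .caseOf M _ N => M.loopFree ∧ N.loopFree
  | .loop _ _ => False

variable [DecidableEq Loc]

/-- A memory: a family of stacks of terms indexed by the locations
(stacks are lists with the head as top). -/
def Mem (Loc Ch : Type) := Loc → List (Tm Loc Ch)

/-- `S.push a N` pushes `N` onto the stack at location `a`. -/
def Mem.push (S : Mem Loc Ch) (a : Loc) (N : Tm Loc Ch) : Mem Loc Ch :=
  Function.update S a (N :: S a)

/-- The empty memory. -/
def Mem.empty : Mem Loc Ch := fun _ => []

/-- Big-step evaluation `(S, M) ⇓ (T, i)`. -/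
inductive Eval : Mem Loc Ch → Tm Loc Ch → Mem Loc Ch → Ch → Prop where
  | choice (S : Mem Loc Ch) (i : Ch) : Eval S (.choice i) S i
  | push (S : Mem Loc Ch) (N : Tm Loc Ch) (a : Loc) (M : Tm Loc Ch) (T : Mem Loc Ch) (i : Ch) :
      Eval (S.push a N) M T i → Eval S (.push N a M) T i
  | pop (S : Mem Loc Ch) (a : Loc) (N M : Tm Loc Ch) (T : Mem Loc Ch) (i : Ch) :
      Eval S (M.subst 0 N) T i → Eval (S.push a N) (.pop a M) T i
  | case_eq (R S T : Mem Loc Ch) (M N : Tm Loc Ch) (i j : Ch) :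
      Eval R M S i → Eval S N T j → Eval R (.caseOf M i N) T j
  | case_ne (R T : Mem Loc Ch) (M N : Tm Loc Ch) (i j : Ch) (h : i ≠ j) :
      Eval R M T i → Eval R (.caseOf M j N) T i
  | loop_eq (R S T : Mem Loc Ch) (M : Tm Loc Ch) (i j : Ch) :
      Eval R M S i → Eval S (.loop M i) T j → Eval R (.loop M i) T j
  | loop_ne (R T : Mem Loc Ch) (M : Tm Loc Ch) (i j : Ch) (h : i ≠ j) :
      Eval R M T i → Eval R (.loop M j) T i

variable [DecidableEq Ch]

/-- Types `!!s => !!t_I`: an implication from a memory type (family of stack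
types indexed by locations) to a sum type (family of memory types indexed
by a set of choices, represented via `Option`). -/
inductive Ty (Loc Ch : Type) : Type where
  | arr : (Loc → List (Ty Loc Ch)) → (Ch → Option (Loc → List (Ty Loc Ch))) → Ty Loc Ch

/-- Stack types: lists of types (head = top of stack). -/
abbrev StackTy (Loc Ch : Type) := List (Ty Loc Ch)

/-- Memory types: families of stack types indexed by locations. -/
abbrev MemTy (Loc Ch : Type) := Loc → StackTy Loc Ch

/-- Sum types: families of memory types indexed by a set of choices
(`T i = some m` means `i` is in the index set with memory type `m`). -/
abbrev SumTy (Loc Ch : Type) := Ch → Option (MemTy Loc Ch)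

/-- The empty memory type `ε`. -/
def memNil : MemTy Loc Ch := fun _ => []

/-- `memCons a r s` is `a(r)·!!s`: push the type `r` on top at location `a`. -/
def memCons [DecidableEq Loc] (a : Loc) (r : Ty Loc Ch) (s : MemTy Loc Ch) : MemTy Loc Ch :=
  Function.update s a (r :: s a)

/-- Pointwise concatenation of memory types (`r` on top of `s`). -/
def memApp (r s : MemTy Loc Ch) : MemTy Loc Ch := fun a => r a ++ s a

/-- The singleton sum type `!!m.i`. -/
def sumSingle [DecidableEq Ch] (i : Ch) (m : MemTy Loc Ch) : SumTy Loc Ch :=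
  fun j => if j = i then some m else none

/-- Stack expansion of a sum type: place `s` underneath every summand. -/
def sumExpand (s : MemTy Loc Ch) (T : SumTy Loc Ch) : SumTy Loc Ch :=
  fun i => (T i).map fun m => memApp m s

/-- `sumOver S T` is the sum `!!s_I + !!t_{J∖I}`: `S` overriding `T`. -/
def sumOver (S T : SumTy Loc Ch) : SumTy Loc Ch :=
  fun i => match S i with
    | some m => some m
    | none => T i

variable [DecidableEq Loc] [DecidableEq Ch]

/-- The typing judgement `Γ ⊢ M : t` of the simply-typed FMC with control,
with de Bruijn contexts (lists of types). -/
inductive Typing : List (Ty Loc Ch) → Tm Loc Ch → Ty Loc Ch → Prop where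
  | var (Γ : List (Ty Loc Ch)) (n : ℕ) (t : Ty Loc Ch) (h : Γ[n]? = some t) :
      Typing Γ (.var n) t
  | choice (Γ : List (Ty Loc Ch)) (i : Ch) :
      Typing Γ (.choice i) (.arr memNil (sumSingle i memNil))
  | push (Γ : List (Ty Loc Ch)) (N : Tm Loc Ch) (r : Ty Loc Ch) (a : Loc)
      (M : Tm Loc Ch) (s : MemTy Loc Ch) (T : SumTy Loc Ch) :
      Typing Γ N r → Typing Γ M (.arr (memCons a r s) T) →
      Typing Γ (.push N a M) (.arr s T)
  | pop (Γ : List (Ty Loc Ch)) (r : Ty Loc Ch) (a : Loc) (M : Tm Loc Ch)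
      (s : MemTy Loc Ch) (T : SumTy Loc Ch) :
      Typing (r :: Γ) M (.arr s T) →
      Typing Γ (.pop a M) (.arr (memCons a r s) T)
  | caseOf (Γ : List (Ty Loc Ch)) (M N : Tm Loc Ch) (i : Ch)
      (r s : MemTy Loc Ch) (T : SumTy Loc Ch) :
      Typing Γ M (.arr r (Function.update T i (some s))) →
      Typing Γ N (.arr s T) →
      Typing Γ (.caseOf M i N) (.arr r T)
  | loop (Γ : List (Ty Loc Ch)) (M : Tm Loc Ch) (i : Ch)
      (s : MemTy Loc Ch) (T : SumTy Loc Ch) (h : T i = none) :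
      Typing Γ M (.arr s (Function.update T i (some s))) →
      Typing Γ (.loop M i) (.arr s T)
  | expand (Γ : List (Ty Loc Ch)) (M : Tm Loc Ch)
      (r s : MemTy Loc Ch) (T : SumTy Loc Ch) :
      Typing Γ M (.arr r T) →
      Typing Γ M (.arr (memApp r s) (sumExpand s T))
  | incl (Γ : List (Ty Loc Ch)) (M : Tm Loc Ch) (r : MemTy Loc Ch)
      (T U : SumTy Loc Ch) (h : ∀ i, T i = none ∨ U i = none) :
      Typing Γ M (.arr r T) →
      Typing Γ M (.arr r (sumOver T U))

/-- A type is OK if it conforms to the grammar (all memory types and sum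
types are finitely supported) and is zero-free (every sum type occurring in
it is indexed by a nonempty set of choices). -/
inductive TyOK : Ty Loc Ch → Prop where
  | arr (s : MemTy Loc Ch) (T : SumTy Loc Ch)
      (hs1 : {a | s a ≠ []}.Finite)
      (hs2 : ∀ a, ∀ t ∈ s a, TyOK t)
      (hT0 : ∃ i, T i ≠ none)
      (hT1 : {i | T i ≠ none}.Finite)
      (hT2 : ∀ i m, T i = some m → {a | m a ≠ []}.Finite)
      (hT3 : ∀ i m, T i = some m → ∀ a, ∀ t ∈ m a, TyOK t) :
      TyOK (.arr s T)

set_option linter.unusedSectionVars false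
attribute [reducible] Mem

/-! ### Auxiliary: free-variable bounds -/

/-- All free de Bruijn indices of `M` are `< k`. -/
def Tm.FreeLt : Tm Loc Ch → ℕ → Prop
  | .var n, k => n < k
  | .push N _ M, k => N.FreeLt k ∧ M.FreeLt k
  | .pop _ M, k => M.FreeLt (k + 1)
  | .choice _, _ => True
  | .caseOf M _ N, k => M.FreeLt k ∧ N.FreeLt k
  | .loop M _, k => M.FreeLt k

theorem Tm.FreeLt.mono {M : Tm Loc Ch} : ∀ {k k' : ℕ}, M.FreeLt k → k ≤ k' → M.FreeLt k' := by
  induction M with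
  | var n => intro k k' h hk; exact lt_of_lt_of_le h hk
  | push N a M ihN ihM => intro k k' h hk; exact ⟨ihN h.1 hk, ihM h.2 hk⟩
  | pop a M ih => intro k k' h hk; exact ih h (Nat.succ_le_succ hk)
  | choice i => intro _ _ _ _; trivial
  | caseOf M i N ihM ihN => intro k k' h hk; exact ⟨ihM h.1 hk, ihN h.2 hk⟩
  | loop M i ih => intro k k' h hk; exact ih h hk

theorem Tm.lift_of_freeLt : ∀ (M : Tm Loc Ch) (k d : ℕ), M.FreeLt k → k ≤ d → M.lift d = M
  | .var n, k, d, h, hk => by simp [Tm.lift, lt_of_lt_of_le h hk]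
  | .push N a M, k, d, h, hk => by
      simp [Tm.lift, Tm.lift_of_freeLt N k d h.1 hk, Tm.lift_of_freeLt M k d h.2 hk]
  | .pop a M, k, d, h, hk => by
      simp [Tm.lift, Tm.lift_of_freeLt M (k+1) (d+1) h (Nat.succ_le_succ hk)]
  | .choice i, _, _, _, _ => rfl
  | .caseOf M i N, k, d, h, hk => by
      simp [Tm.lift, Tm.lift_of_freeLt M k d h.1 hk, Tm.lift_of_freeLt N k d h.2 hk]
  | .loop M i, k, d, h, hk => by
      simp [Tm.lift, Tm.lift_of_freeLt M k d h hk]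

theorem Tm.subst_of_freeLt : ∀ (M : Tm Loc Ch) (k d : ℕ) (N : Tm Loc Ch),
    M.FreeLt k → k ≤ d → M.subst d N = M
  | .var n, k, d, N, h, hk => by
      have h1 : n < d := lt_of_lt_of_le h hk
      simp [Tm.subst, h1, Nat.ne_of_lt h1]
  | .push P a M, k, d, N, h, hk => by
      simp [Tm.subst, Tm.subst_of_freeLt P k d N h.1 hk, Tm.subst_of_freeLt M k d N h.2 hk]
  | .pop a M, k, d, N, h, hk => by
      simp [Tm.subst, Tm.subst_of_freeLt M (k+1) (d+1) _ h (Nat.succ_le_succ hk)]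
  | .choice i, _, _, _, _, _ => rfl
  | .caseOf M i P, k, d, N, h, hk => by
      simp [Tm.subst, Tm.subst_of_freeLt M k d N h.1 hk, Tm.subst_of_freeLt P k d N h.2 hk]
  | .loop M i, k, d, N, h, hk => by
      simp [Tm.subst, Tm.subst_of_freeLt M k d N h hk]

theorem Tm.subst_freeLt : ∀ (M : Tm Loc Ch) (k d : ℕ) (N : Tm Loc Ch),
    k ≤ d → M.FreeLt (d + 1) → N.FreeLt 0 → (M.subst k N).FreeLt d
  | .var n, k, d, N, hkd, hM, hN => by
      by_cases h1 : n = k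
      · simpa [Tm.subst, h1] using hN.mono (Nat.zero_le d)
      · by_cases h2 : n < k
        · simpa [Tm.subst, h1, h2, Tm.FreeLt] using lt_of_lt_of_le h2 hkd
        · have hn : 1 ≤ n := by omega
          have : n - 1 < d := by
            have : n < d + 1 := hM
            omega
          simpa [Tm.subst, h1, h2, Tm.FreeLt] using this
  | .push P a M, k, d, N, hkd, hM, hN =>
      ⟨Tm.subst_freeLt P k d N hkd hM.1 hN, Tm.subst_freeLt M k d N hkd hM.2 hN⟩
  | .pop a M, k, d, N, hkd, hM, hN => by
      show (M.subst (k+1) (N.lift 0)).FreeLt (d + 1)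
      rw [Tm.lift_of_freeLt N 0 0 hN (le_refl 0)]
      exact Tm.subst_freeLt M (k+1) (d+1) N (Nat.succ_le_succ hkd) hM hN
  | .choice i, _, _, _, _, _, _ => trivial
  | .caseOf M i P, k, d, N, hkd, hM, hN =>
      ⟨Tm.subst_freeLt M k d N hkd hM.1 hN, Tm.subst_freeLt P k d N hkd hM.2 hN⟩
  | .loop M i, k, d, N, hkd, hM, hN => Tm.subst_freeLt M k d N hkd hM hN

/-- Substituting at neighbouring indices with closed terms commutes. -/
theorem Tm.subst_subst_comm : ∀ (M : Tm Loc Ch) (k : ℕ) (N P : Tm Loc Ch),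
    N.FreeLt 0 → P.FreeLt 0 →
    (M.subst (k + 1) P).subst k N = (M.subst k N).subst k P
  | .var n, k, N, P, hN, hP => by
      rcases lt_trichotomy n k with h | h | h
      · simp [Tm.subst, h, Nat.ne_of_lt h, Nat.lt_succ_of_lt h,
          Nat.ne_of_lt (Nat.lt_succ_of_lt h)]
      · subst h
        simp [Tm.subst, Nat.lt_succ_self, Nat.ne_of_lt (Nat.lt_succ_self n),
          Tm.subst_of_freeLt N 0 n P hN (Nat.zero_le n)]
      · rcases Nat.eq_or_lt_of_le (Nat.succ_le_of_lt h) with h1 | h1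
        · -- n = k + 1
          have hn : n = k + 1 := h1.symm
          subst hn
          simp [Tm.subst, Nat.lt_irrefl, Nat.ne_of_gt h, Nat.lt_succ_self,
            Tm.subst_of_freeLt P 0 k N hP (Nat.zero_le k)]
        · -- n > k + 1
          have h2 : n ≠ k + 1 := by omega
          have h3 : ¬ n < k + 1 := by omega
          have h4 : n ≠ k := by omega
          have h5 : ¬ n < k := by omega
          have h6 : n - 1 ≠ k := by omega
          have h7 : ¬ n - 1 < k := by omega
          simp [Tm.subst, h2, h3, h4, h5, h6, h7]
  | .push Q a M, k, N, P, hN, hP => by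
      simp [Tm.subst, Tm.subst_subst_comm Q k N P hN hP, Tm.subst_subst_comm M k N P hN hP]
  | .pop a M, k, N, P, hN, hP => by
      simp only [Tm.subst, Tm.lift_of_freeLt N 0 0 hN (le_refl 0),
        Tm.lift_of_freeLt P 0 0 hP (le_refl 0)]
      rw [Tm.subst_subst_comm M (k+1) N P hN hP]
  | .choice i, _, _, _, _, _ => rfl
  | .caseOf M i Q, k, N, P, hN, hP => by
      simp [Tm.subst, Tm.subst_subst_comm M k N P hN hP, Tm.subst_subst_comm Q k N P hN hP]
  | .loop M i, k, N, P, hN, hP => by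
      simp [Tm.subst, Tm.subst_subst_comm M k N P hN hP]
/-! ### Simultaneous substitution by a list of closed terms -/

/-- Substitute the closed terms `σ` for the indices `k, k+1, …` in `M`. -/
def msub (k : ℕ) (σ : List (Tm Loc Ch)) (M : Tm Loc Ch) : Tm Loc Ch :=
  σ.foldl (fun M N => M.subst k N) M

@[simp] theorem msub_nil (k : ℕ) (M : Tm Loc Ch) : msub k [] M = M := rfl

theorem msub_cons (k : ℕ) (N : Tm Loc Ch) (σ : List (Tm Loc Ch)) (M : Tm Loc Ch) :
    msub k (N :: σ) M = msub k σ (M.subst k N) := rfl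

theorem msub_of_freeLt (k : ℕ) (σ : List (Tm Loc Ch)) (M : Tm Loc Ch)
    (h : M.FreeLt k) : msub k σ M = M := by
  induction σ with
  | nil => rfl
  | cons N σ ih => rw [msub_cons, Tm.subst_of_freeLt M k k N h (le_refl k)]; exact ih

theorem msub_push (k : ℕ) (σ : List (Tm Loc Ch)) (N : Tm Loc Ch) (a : Loc) (M : Tm Loc Ch) :
    msub k σ (.push N a M) = .push (msub k σ N) a (msub k σ M) := by
  induction σ generalizing N M with
  | nil => rfl
  | cons P σ ih => rw [msub_cons]; exact ih _ _

theorem msub_caseOf (k : ℕ) (σ : List (Tm Loc Ch)) (M : Tm Loc Ch) (i : Ch) (N : Tm Loc Ch) :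
    msub k σ (.caseOf M i N) = .caseOf (msub k σ M) i (msub k σ N) := by
  induction σ generalizing N M with
  | nil => rfl
  | cons P σ ih => rw [msub_cons]; exact ih _ _

theorem msub_loop (k : ℕ) (σ : List (Tm Loc Ch)) (M : Tm Loc Ch) (i : Ch) :
    msub k σ (.loop M i) = .loop (msub k σ M) i := by
  induction σ generalizing M with
  | nil => rfl
  | cons P σ ih => rw [msub_cons]; exact ih _

theorem msub_choice (k : ℕ) (σ : List (Tm Loc Ch)) (i : Ch) :
    msub k σ (.choice i) = .choice i := by
  induction σ with
  | nil => rfl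
  | cons P σ ih => rw [msub_cons]; exact ih

theorem msub_pop (k : ℕ) (σ : List (Tm Loc Ch)) (a : Loc) (M : Tm Loc Ch)
    (hσ : ∀ N ∈ σ, Tm.FreeLt N 0) :
    msub k σ (.pop a M) = .pop a (msub (k + 1) σ M) := by
  induction σ generalizing M with
  | nil => rfl
  | cons P σ ih =>
      rw [msub_cons]
      show msub k σ (.pop a (M.subst (k+1) (P.lift 0))) = _
      rw [Tm.lift_of_freeLt P 0 0 (hσ P (by simp)) (le_refl 0)]
      rw [ih _ (fun N hN => hσ N (by simp [hN]))]
      rfl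

theorem msub_subst (k : ℕ) (σ : List (Tm Loc Ch)) (M N : Tm Loc Ch)
    (hN : N.FreeLt 0) (hσ : ∀ P ∈ σ, Tm.FreeLt P 0) :
    (msub (k + 1) σ M).subst k N = msub k σ (M.subst k N) := by
  induction σ generalizing M with
  | nil => rfl
  | cons P σ ih =>
      rw [msub_cons, msub_cons]
      rw [ih _ (fun Q hQ => hσ Q (by simp [hQ]))]
      rw [Tm.subst_subst_comm M k N P hN (hσ P (by simp))]

theorem msub_var (k : ℕ) (σ : List (Tm Loc Ch)) (j : ℕ) (hj : j < σ.length)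
    (hσ : ∀ P ∈ σ, Tm.FreeLt P 0) :
    msub k σ (.var (k + j)) = σ.get ⟨j, hj⟩ := by
  induction σ generalizing j with
  | nil => simp at hj
  | cons P σ ih =>
      cases j with
      | zero =>
          rw [msub_cons]
          show msub k σ ((Tm.var (k+0)).subst k P) = P
          have : (Tm.var (k+0)).subst k P = P := by simp [Tm.subst]
          rw [this]
          exact msub_of_freeLt k σ P ((hσ P (by simp)).mono (Nat.zero_le k))
      | succ j =>
          rw [msub_cons]
          have : (Tm.var (k + (j+1))).subst k P = Tm.var (k + j) := by
            have h1 : k + (j + 1) ≠ k := by omega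
            have h2 : ¬ k + (j + 1) < k := by omega
            have h3 : k + (j + 1) - 1 = k + j := by omega
            simp [Tm.subst, h1, h2, h3]
          rw [this]
          exact ih j (by simpa using hj) (fun Q hQ => hσ Q (by simp [hQ]))

theorem msub_freeLt (k : ℕ) (σ : List (Tm Loc Ch)) (M : Tm Loc Ch)
    (hM : M.FreeLt (k + σ.length)) (hσ : ∀ P ∈ σ, Tm.FreeLt P 0) :
    (msub k σ M).FreeLt k := by
  induction σ generalizing M with
  | nil => exact hM
  | cons P σ ih =>
      rw [msub_cons]
      refine ih _ ?_ (fun Q hQ => hσ Q (by simp [hQ]))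
      refine Tm.subst_freeLt M k (k + σ.length) P (by omega) ?_ (hσ P (by simp))
      exact hM.mono (by simp; omega)

/-- Typed terms have free indices bounded by the context length. -/
theorem Typing.freeLt {Γ : List (Ty Loc Ch)} {M : Tm Loc Ch} {t : Ty Loc Ch}
    (h : Typing Γ M t) : M.FreeLt Γ.length := by
  induction h with
  | var Γ n t h => exact (List.getElem?_eq_some_iff.mp h).1
  | choice Γ i => trivial
  | push Γ N r a M s T hN hM ihN ihM => exact ⟨ihN, ihM⟩
  | pop Γ r a M s T hM ihM => exact ihM
  | caseOf Γ M N i r s T hM hN ihM ihN => exact ⟨ihM, ihN⟩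
  | loop Γ M i s T h hM ihM => exact ihM
  | expand Γ M r s T hM ihM => exact ihM
  | incl Γ M r T U h hM ihM => exact ihM
/-! ### The reducibility predicate -/

def Ty.inp : Ty Loc Ch → MemTy Loc Ch
  | .arr s _ => s

def Ty.out : Ty Loc Ch → SumTy Loc Ch
  | .arr _ T => T

@[simp] theorem Ty.inp_arr (s : MemTy Loc Ch) (T : SumTy Loc Ch) : (Ty.arr s T).inp = s := rfl
@[simp] theorem Ty.out_arr (s : MemTy Loc Ch) (T : SumTy Loc Ch) : (Ty.arr s T).out = T := rfl

/-- Immediate sub-type order on `Ty`. -/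
inductive TySub : Ty Loc Ch → Ty Loc Ch → Prop where
  | mem_s (a : Loc) (t u : Ty Loc Ch) (h : t ∈ u.inp a) : TySub t u
  | mem_T (i : Ch) (m : MemTy Loc Ch) (a : Loc) (t u : Ty Loc Ch)
      (hm : u.out i = some m) (h : t ∈ m a) : TySub t u

theorem tySub_wf : WellFounded (@TySub Loc Ch) := by
  constructor
  intro t
  induction t using Ty.rec
    (motive_2 := fun l => ∀ t ∈ l, Acc TySub t)
    (motive_3 := fun o => ∀ m, o = some m → ∀ a, ∀ t ∈ m a, Acc TySub t) with
  | arr s T ih2 ih3 =>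
      constructor
      intro t ht
      cases ht with
      | mem_s a t u h => exact ih2 a t h
      | mem_T i m a t u hm h => exact ih3 i m hm a t h
  | nil => rename_i t ht; cases ht
  | cons hd tl ihh iht =>
      rename_i t ht
      cases ht with
      | head => exact ihh
      | tail _ h => exact iht t h
  | none => rename_i h _ _ _; cases h
  | some val ih =>
      rename_i m h a t ht
      cases h; exact ih a t ht

/-- Append two memories pointwise. -/
def memAppend (P R : Mem Loc Ch) : Mem Loc Ch := fun a => P a ++ R a

/-- The reducibility (logical) predicate: `Red t M` says that from any memory
consisting of reducible stacks matching the input of `t` on top of an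
arbitrary rest, `M` evaluates to a choice in the output sum of `t`, leaving
matching reducible stacks on top of the untouched rest. -/
def redF (t : Ty Loc Ch) (IH : ∀ u, TySub u t → Tm Loc Ch → Prop) (M : Tm Loc Ch) : Prop :=
  M.FreeLt 0 ∧ ∀ P R : Mem Loc Ch,
    (∀ a, List.Forall₂ (fun N r => ∃ h : TySub r t, IH r h N) (P a) (t.inp a)) →
    ∃ (i : Ch) (m : MemTy Loc Ch) (Q : Mem Loc Ch), t.out i = some m ∧
      (∀ a, List.Forall₂ (fun N r => ∃ h : TySub r t, IH r h N) (Q a) (m a)) ∧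
      Eval (memAppend P R) M (memAppend Q R) i

def Red : Ty Loc Ch → Tm Loc Ch → Prop :=
  WellFounded.fix tySub_wf redF

theorem red_unfold (t : Ty Loc Ch) (M : Tm Loc Ch) :
    Red t M ↔ redF t (fun u _ => Red u) M :=
  iff_of_eq (congrFun (WellFounded.fix_eq tySub_wf redF t) M)

/-- A memory of reducible stacks matching a memory type. -/
def RedS (S : Mem Loc Ch) (m : MemTy Loc Ch) : Prop :=
  ∀ a, List.Forall₂ (fun N r => Red r N) (S a) (m a)

private theorem forall₂_congr_mem {α β : Type*} {p q : α → β → Prop} :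
    ∀ {l₁ : List α} {l₂ : List β}, (∀ x y, y ∈ l₂ → (p x y ↔ q x y)) →
      (List.Forall₂ p l₁ l₂ ↔ List.Forall₂ q l₁ l₂) := by
  intro l₁ l₂
  induction l₂ generalizing l₁ with
  | nil => intro _; cases l₁ <;> simp
  | cons y ys ih =>
      intro h
      cases l₁ with
      | nil => simp
      | cons x xs =>
          simp only [List.forall₂_cons]
          rw [h x y (by simp), ih (fun x' y' hy' => h x' y' (by simp [hy']))]

private theorem exists_tySub_iff {r t : Ty Loc Ch} {N : Tm Loc Ch} (h : TySub r t) :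
    (∃ _ : TySub r t, Red r N) ↔ Red r N :=
  ⟨fun ⟨_, h'⟩ => h', fun h' => ⟨h, h'⟩⟩

theorem red_arr (s : MemTy Loc Ch) (T : SumTy Loc Ch) (M : Tm Loc Ch) :
    Red (.arr s T) M ↔
      (M.FreeLt 0 ∧ ∀ P R : Mem Loc Ch, RedS P s →
        ∃ (i : Ch) (m : MemTy Loc Ch) (Q : Mem Loc Ch), T i = some m ∧
          RedS Q m ∧ Eval (memAppend P R) M (memAppend Q R) i) := by
  rw [red_unfold]
  simp only [redF, Ty.inp_arr, Ty.out_arr]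
  constructor
  · rintro ⟨h0, h⟩
    refine ⟨h0, fun P R hP => ?_⟩
    obtain ⟨i, m, Q, hm, hQ, hev⟩ := h P R (fun a => by
      refine (forall₂_congr_mem (fun N r hr => ?_)).mpr (hP a)
      exact exists_tySub_iff (TySub.mem_s a r _ hr))
    refine ⟨i, m, Q, hm, fun a => ?_, hev⟩
    refine (forall₂_congr_mem (fun N r hr => ?_)).mp (hQ a)
    exact exists_tySub_iff (TySub.mem_T i m a r _ hm hr)
  · rintro ⟨h0, h⟩
    refine ⟨h0, fun P R hP => ?_⟩
    obtain ⟨i, m, Q, hm, hQ, hev⟩ := h P R (fun a => by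
      refine (forall₂_congr_mem (fun N r hr => ?_)).mp (hP a)
      exact exists_tySub_iff (TySub.mem_s a r _ hr))
    refine ⟨i, m, Q, hm, fun a => ?_, hev⟩
    refine (forall₂_congr_mem (fun N r hr => ?_)).mpr (hQ a)
    exact exists_tySub_iff (TySub.mem_T i m a r _ hm hr)

theorem red_closed {t : Ty Loc Ch} {M : Tm Loc Ch} (h : Red t M) : M.FreeLt 0 := by
  obtain ⟨s, T⟩ := t
  exact ((red_arr s T M).mp h).1
/-! ### Memory lemmas -/

theorem memAppend_push (P R : Mem Loc Ch) (a : Loc) (N : Tm Loc Ch) :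
    memAppend (P.push a N) R = (memAppend P R).push a N := by
  funext b
  by_cases hb : b = a
  · subst hb; simp [memAppend, Mem.push]
  · simp [memAppend, Mem.push, Function.update_of_ne hb]

theorem memAppend_nil_left (P R : Mem Loc Ch) (h : ∀ a, P a = []) : memAppend P R = R := by
  funext b; simp [memAppend, h b]

theorem memAppend_assoc (P Q R : Mem Loc Ch) :
    memAppend (memAppend P Q) R = memAppend P (memAppend Q R) := by
  funext b; simp [memAppend]

/-! ### Evaluation of sequences of pops and pushes -/

/-- `pops as K`: pop (and discard) once at each location in `as`, then run `K`. -/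
def pops (as : List Loc) (K : Tm Loc Ch) : Tm Loc Ch :=
  as.foldr (fun a K => .pop a K) K

/-- `pushesAt a L K`: push the terms of `L` at `a` (so that afterwards the
stack at `a` is `L ++ old`), then run `K`. -/
def pushesAt (a : Loc) (L : List (Tm Loc Ch)) (K : Tm Loc Ch) : Tm Loc Ch :=
  L.foldl (fun K N => .push N a K) K

/-- Push `w a` at each location `a ∈ ls`, then run `K`. -/
def pushesMem (ls : List Loc) (w : Loc → List (Tm Loc Ch)) (K : Tm Loc Ch) : Tm Loc Ch :=
  ls.foldr (fun a K => pushesAt a (w a) K) K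

theorem pops_freeLt (as : List Loc) (K : Tm Loc Ch) (hK : K.FreeLt 0) :
    (pops as K).FreeLt 0 := by
  suffices h : ∀ n, (pops as K).FreeLt n by exact h 0
  induction as with
  | nil => intro n; exact hK.mono (Nat.zero_le n)
  | cons a as ih => intro n; exact (ih (n+1) : (pops as K).FreeLt (n+1))

theorem pushesAt_freeLt (a : Loc) (L : List (Tm Loc Ch)) :
    ∀ (K : Tm Loc Ch), (∀ N ∈ L, N.FreeLt 0) → K.FreeLt 0 → (pushesAt a L K).FreeLt 0 := by
  induction L with
  | nil => intro K _ hK; exact hK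
  | cons N L ih =>
      intro K hL hK
      exact ih (.push N a K) (fun P hP => hL P (List.mem_cons_of_mem _ hP))
        (⟨hL N (List.mem_cons_self), hK⟩ : (Tm.push N a K).FreeLt 0)

theorem pushesMem_freeLt (ls : List Loc) (w : Loc → List (Tm Loc Ch)) (K : Tm Loc Ch)
    (hw : ∀ a, ∀ N ∈ w a, N.FreeLt 0) (hK : K.FreeLt 0) : (pushesMem ls w K).FreeLt 0 := by
  induction ls with
  | nil => exact hK
  | cons a ls ih => exact pushesAt_freeLt a (w a) _ (hw a) ih

theorem eval_pops (as : List Loc) (K : Tm Loc Ch) (hK : K.FreeLt 0) :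
    ∀ (P R T : Mem Loc Ch) (i : Ch), (∀ a, (P a).length = as.count a) →
      Eval R K T i → Eval (memAppend P R) (pops as K) T i := by
  induction as with
  | nil =>
      intro P R T i hP hev
      have : memAppend P R = R :=
        memAppend_nil_left P R fun a => List.length_eq_zero_iff.mp (by simpa using hP a)
      rwa [this]
  | cons a as ih =>
      intro P R T i hP hev
      have hPa : (P a).length = as.count a + 1 := by
        have := hP a; rwa [List.count_cons_self] at this
      obtain ⟨N, P₂, hNP⟩ : ∃ N P₂, P a = N :: P₂ := by
        cases h : P a with
        | nil => rw [h] at hPa; simp at hPa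
        | cons N P₂ => exact ⟨N, P₂, rfl⟩
      have key : memAppend P R = (memAppend (Function.update P a P₂) R).push a N := by
        funext b
        by_cases hb : b = a
        · subst hb; simp [memAppend, Mem.push, hNP]
        · simp [memAppend, Mem.push, Function.update_of_ne hb]
      rw [key]
      show Eval _ (.pop a (pops as K)) T i
      apply Eval.pop
      rw [Tm.subst_of_freeLt (pops as K) 0 0 N (pops_freeLt as K hK) (le_refl 0)]
      refine ih _ _ _ _ ?_ hev
      intro b
      by_cases hb : b = a
      · subst hb
        simp only [Function.update_self]
        have := hP b
        rw [hNP] at this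
        simp only [List.length_cons, List.count_cons_self] at this
        omega
      · rw [Function.update_of_ne hb]
        have := hP b
        rwa [List.count_cons_of_ne (Ne.symm hb)] at this
  
theorem eval_pushesAt (a : Loc) (L : List (Tm Loc Ch)) :
    ∀ (K : Tm Loc Ch) (S T : Mem Loc Ch) (i : Ch),
      Eval (Function.update S a (L ++ S a)) K T i → Eval S (pushesAt a L K) T i := by
  induction L with
  | nil =>
      intro K S T i hev
      simpa [Function.update_eq_self, pushesAt] using hev
  | cons N L ih =>
      intro K S T i hev
      show Eval S (pushesAt a L (.push N a K)) T i
      apply ih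
      apply Eval.push
      have : Mem.push (Function.update S a (L ++ S a)) a N = Function.update S a (N :: L ++ S a) := by
        funext b
        by_cases hb : b = a
        · subst hb; simp [Mem.push]
        · simp [Mem.push, Function.update_of_ne hb]
      rw [this]
      exact hev

theorem eval_pushesMem (ls : List Loc) (w : Loc → List (Tm Loc Ch)) (hnd : ls.Nodup) :
    ∀ (K : Tm Loc Ch) (S T : Mem Loc Ch) (i : Ch),
      Eval (fun b => (if b ∈ ls then w b else []) ++ S b) K T i →
      Eval S (pushesMem ls w K) T i := by
  induction ls with
  | nil =>
      intro K S T i hev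
      simpa [pushesMem] using hev
  | cons a ls ih =>
      intro K S T i hev
      have hnd' : ls.Nodup := hnd.of_cons
      have ha : a ∉ ls := by simp at hnd; exact hnd.1
      show Eval S (pushesAt a (w a) (pushesMem ls w K)) T i
      apply eval_pushesAt
      apply ih hnd'
      have : (fun b => (if b ∈ ls then w b else []) ++ Function.update S a (w a ++ S a) b)
          = fun b => (if b ∈ a :: ls then w b else []) ++ S b := by
        funext b
        by_cases hb : b = a
        · subst hb; simp [ha]
        · simp [Function.update_of_ne hb, hb]
      rw [this]
      exact hev
/-! ### Inhabitation of zero-free types by reducible terms -/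

private theorem forall₂_map_red (g : Ty Loc Ch → Tm Loc Ch) :
    ∀ (l : List (Ty Loc Ch)), (∀ r ∈ l, Red r (g r)) →
      List.Forall₂ (fun N r => Red r N) (l.map g) l := by
  intro l
  induction l with
  | nil => intro _; simp
  | cons r l ih =>
      intro h
      simp only [List.map_cons, List.forall₂_cons]
      exact ⟨h r (by simp), ih fun r' hr' => h r' (by simp [hr'])⟩

private theorem count_flatMap_replicate (f : Loc → ℕ) :
    ∀ (l : List Loc), l.Nodup → ∀ b,
      (l.flatMap fun a => List.replicate (f a) a).count b = if b ∈ l then f b else 0 := by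
  intro l
  induction l with
  | nil => intro _ b; simp
  | cons a l ih =>
      intro hnd b
      have ha : a ∉ l := (List.nodup_cons.mp hnd).1
      rw [List.flatMap_cons, List.count_append, List.count_replicate,
        ih (List.nodup_cons.mp hnd).2 b]
      by_cases hb : b = a
      · subst hb; simp [ha]
      · simp [hb, Ne.symm hb]

theorem red_inhabited : ∀ (t : Ty Loc Ch), TyOK t → ∃ M, Red t M := by
  intro t ht
  induction ht with
  | arr s T hs1 hs2 hT0 hT1 hT2 hT3 ihs ihT =>
      classical
      obtain ⟨i, hi⟩ := hT0
      obtain ⟨m, hm⟩ := Option.ne_none_iff_exists'.mp hi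
      set g : Ty Loc Ch → Tm Loc Ch :=
        fun r => if h : ∃ N, Red r N then h.choose else Tm.var 0 with hg
      have hw : ∀ a, ∀ r ∈ m a, Red r (g r) := by
        intro a r hr
        have h : ∃ N, Red r N := ihT i m hm a r hr
        simp only [hg, dif_pos h]
        exact h.choose_spec
      set w : Loc → List (Tm Loc Ch) := fun a => (m a).map g with hwdef
      set ls := (hT2 i m hm).toFinset.toList with hls
      set as := (hs1.toFinset.toList).flatMap
        (fun a => List.replicate ((s a).length) a) with has
      have hfree : (pushesMem ls w (.choice i)).FreeLt 0 := by
        apply pushesMem_freeLt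
        · intro a N hN
          obtain ⟨r, hr, rfl⟩ := List.mem_map.mp hN
          exact red_closed (hw a r hr)
        · trivial
      refine ⟨pops as (pushesMem ls w (.choice i)), ?_⟩
      rw [red_arr]
      refine ⟨pops_freeLt _ _ hfree, ?_⟩
      intro P R hP
      refine ⟨i, m, (fun b => if b ∈ ls then w b else []), hm, ?_, ?_⟩
      · intro b
        by_cases hb : b ∈ ls
        · simp only [if_pos hb]
          exact forall₂_map_red g (m b) (hw b)
        · have hmb : m b = [] := by
            by_contra hne
            exact hb (by rw [hls, Finset.mem_toList, Set.Finite.mem_toFinset]; exact hne)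
          simp [if_neg hb, hmb]
      · apply eval_pops as _ hfree
        · intro a
          rw [has, count_flatMap_replicate _ _ (Finset.nodup_toList _) a]
          by_cases ha : a ∈ hs1.toFinset.toList
          · rw [if_pos ha]
            exact (hP a).length_eq
          · rw [if_neg ha]
            have hsa : s a = [] := by
              by_contra hne
              exact ha (by rw [Finset.mem_toList, Set.Finite.mem_toFinset]; exact hne)
            have := (hP a).length_eq
            rw [hsa] at this
            simpa using this
        · apply eval_pushesMem ls w (Finset.nodup_toList _)
          exact Eval.choice _ i
/-! ### The fundamental lemma -/

theorem redσ_closed {σ : List (Tm Loc Ch)} {Γ : List (Ty Loc Ch)}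
    (hσ : List.Forall₂ (fun N r => Red r N) σ Γ) : ∀ N ∈ σ, N.FreeLt 0 := by
  induction hσ with
  | nil => intro N hN; simp at hN
  | cons h _ ih =>
      intro N hN
      rcases List.mem_cons.mp hN with rfl | hN
      · exact red_closed h
      · exact ih N hN

theorem fundamental {Γ : List (Ty Loc Ch)} {M : Tm Loc Ch} {t : Ty Loc Ch}
    (h : Typing Γ M t) : M.loopFree → ∀ σ : List (Tm Loc Ch),
      List.Forall₂ (fun N r => Red r N) σ Γ → Red t (msub 0 σ M) := by
  induction h with
  | var Γ n t h =>
      intro _ σ hσ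
      obtain ⟨hn, hget⟩ := List.getElem?_eq_some_iff.mp h
      have hlen := hσ.length_eq
      have hn' : n < σ.length := by omega
      have heq : msub 0 σ (.var n) = σ.get ⟨n, hn'⟩ := by
        rw [show Tm.var n = Tm.var (0 + n) by rw [Nat.zero_add]]
        exact msub_var 0 σ n hn' (redσ_closed hσ)
      rw [heq]
      have := hσ.get hn' (by omega)
      simpa [List.get_eq_getElem, hget] using this
  | choice Γ i =>
      intro _ σ hσ
      rw [msub_choice, red_arr]
      refine ⟨trivial, ?_⟩
      intro P R hP
      have hPnil : ∀ a, P a = [] := fun a => List.forall₂_nil_right_iff.mp (hP a)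
      refine ⟨i, memNil, (fun _ => []), by simp [sumSingle], fun a => List.Forall₂.nil, ?_⟩
      rw [memAppend_nil_left P R hPnil, memAppend_nil_left _ R (fun _ => rfl)]
      exact Eval.choice R i
  | push Γ N r a M s T hN hM ihN ihM =>
      intro hlf σ hσ
      have IHN := ihN hlf.1 σ hσ
      have IHM := ihM hlf.2 σ hσ
      rw [msub_push, red_arr]
      obtain ⟨hMc, hMrun⟩ := (red_arr _ _ _).mp IHM
      refine ⟨⟨red_closed IHN, hMc⟩, ?_⟩
      intro P R hP
      have hstacks : RedS (P.push a (msub 0 σ N)) (memCons a r s) := by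
        intro b
        by_cases hb : b = a
        · subst hb
          show List.Forall₂ _ (Mem.push P b (msub 0 σ N) b) (memCons b r s b)
          simp only [Mem.push, memCons, Function.update_self]
          exact List.Forall₂.cons IHN (hP b)
        · show List.Forall₂ _ (Mem.push P a (msub 0 σ N) b) (memCons a r s b)
          simp only [Mem.push, memCons, Function.update_of_ne hb]
          exact hP b
      obtain ⟨i, m, Q, hm, hQ, hev⟩ := hMrun (P.push a (msub 0 σ N)) R hstacks
      refine ⟨i, m, Q, hm, hQ, ?_⟩
      apply Eval.push
      rwa [← memAppend_push]
  | pop Γ r a M s T hM ihM =>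
      intro hlf σ hσ
      have hσc := redσ_closed hσ
      rw [msub_pop 0 σ a M hσc, red_arr]
      constructor
      · show (msub 1 σ M).FreeLt 1
        apply msub_freeLt _ _ _ _ hσc
        have h1 := hM.freeLt
        have hlen := hσ.length_eq
        exact h1.mono (by simp only [List.length_cons]; omega)
      · intro P R hP
        have hPa := hP a
        rw [show memCons a r s a = r :: s a from by simp [memCons]] at hPa
        obtain ⟨N, P₂, hrN, hP₂, hPeq⟩ := List.forall₂_cons_right_iff.mp hPa
        have IH := ihM hlf (N :: σ) (List.Forall₂.cons hrN hσ)
        have heq : msub 0 (N :: σ) M = (msub 1 σ M).subst 0 N := by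
          rw [msub_cons]
          exact (msub_subst 0 σ M N (red_closed hrN) hσc).symm
        rw [heq] at IH
        obtain ⟨_, hIH⟩ := (red_arr _ _ _).mp IH
        have hstacks : RedS (Function.update P a P₂) s := by
          intro b
          by_cases hb : b = a
          · subst hb; simpa using hP₂
          · rw [Function.update_of_ne hb]
            have := hP b
            rwa [show memCons a r s b = s b from by simp [memCons, Function.update_of_ne hb]] at this
        obtain ⟨i, m, Q, hm, hQ, hev⟩ := hIH (Function.update P a P₂) R hstacks
        refine ⟨i, m, Q, hm, hQ, ?_⟩
        have key : memAppend P R = Mem.push (memAppend (Function.update P a P₂) R) a N := by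
          funext b
          by_cases hb : b = a
          · subst hb; simp [memAppend, Mem.push, hPeq]
          · simp [memAppend, Mem.push, Function.update_of_ne hb]
        rw [key]
        exact Eval.pop _ a N _ _ i hev
  | caseOf Γ M N i r s T hM hN ihM ihN =>
      intro hlf σ hσ
      have IHM := ihM hlf.1 σ hσ
      have IHN := ihN hlf.2 σ hσ
      rw [msub_caseOf, red_arr]
      refine ⟨⟨red_closed IHM, red_closed IHN⟩, ?_⟩
      intro P R hP
      obtain ⟨_, hMrun⟩ := (red_arr _ _ _).mp IHM
      obtain ⟨j, m, Q, hjm, hQ, hev⟩ := hMrun P R hP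
      by_cases hij : j = i
      · subst hij
        rw [Function.update_self] at hjm
        obtain rfl : s = m := Option.some.inj hjm
        obtain ⟨_, hNrun⟩ := (red_arr _ _ _).mp IHN
        obtain ⟨j', m', Q', hm', hQ', hev'⟩ := hNrun Q R hQ
        exact ⟨j', m', Q', hm', hQ', Eval.case_eq _ _ _ _ _ j j' hev hev'⟩
      · rw [Function.update_of_ne hij] at hjm
        exact ⟨j, m, Q, hjm, hQ, Eval.case_ne _ _ _ _ j i hij hev⟩
  | loop Γ M i s T h hM ihM =>
      intro hlf
      exact hlf.elim
  | expand Γ M r s T hM ihM =>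
      intro hlf σ hσ
      have IH := ihM hlf σ hσ
      rw [red_arr]
      refine ⟨red_closed IH, ?_⟩
      intro P R hP
      set P1 : Mem Loc Ch := fun a => (P a).take ((r a).length) with hP1def
      set P2 : Mem Loc Ch := fun a => (P a).drop ((r a).length) with hP2def
      have hP1 : RedS P1 r := fun a => List.forall₂_take_append (P a) (r a) (s a) (hP a)
      have hP2 : RedS P2 s := fun a => List.forall₂_drop_append (P a) (r a) (s a) (hP a)
      obtain ⟨_, hrun⟩ := (red_arr _ _ _).mp IH
      obtain ⟨i, m, Q, hm, hQ, hev⟩ := hrun P1 (memAppend P2 R) hP1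
      refine ⟨i, memApp m s, memAppend Q P2, by simp [sumExpand, hm], ?_, ?_⟩
      · intro b
        exact List.rel_append (hQ b) (hP2 b)
      · have e1 : memAppend P1 (memAppend P2 R) = memAppend P R := by
          funext b
          show List.take _ (P b) ++ (List.drop _ (P b) ++ R b) = P b ++ R b
          rw [← List.append_assoc, List.take_append_drop]
        rw [e1] at hev
        rw [memAppend_assoc]
        exact hev
  | incl Γ M r T U h hM ihM =>
      intro hlf σ hσ
      have IH := ihM hlf σ hσ
      rw [red_arr]
      refine ⟨red_closed IH, ?_⟩
      intro P R hP
      obtain ⟨_, hrun⟩ := (red_arr _ _ _).mp IH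
      obtain ⟨i, m, Q, hm, hQ, hev⟩ := hrun P R hP
      refine ⟨i, m, Q, ?_, hQ, hev⟩
      simp [sumOver, hm]
/-- Machine termination: any loop-free term, typed in the empty context with
a zero-free type, is terminating. -/
theorem machine_termination (M : Tm Loc Ch) (t : Ty Loc Ch)
    (hM : M.loopFree) (ht : TyOK t) (hty : Typing [] M t) :
    ∃ (S T : Mem Loc Ch) (i : Ch), Eval S M T i := by
  classical
  cases ht with
  | arr s T hs1 hs2 hT0 hT1 hT2 hT3 =>
      have hred : Red (.arr s T) M := fundamental hty hM [] List.Forall₂.nil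
      set g : Ty Loc Ch → Tm Loc Ch :=
        fun r => if h : ∃ N, Red r N then h.choose else Tm.var 0 with hg
      have hgood : ∀ a, ∀ r ∈ s a, Red r (g r) := by
        intro a r hr
        have h : ∃ N, Red r N := red_inhabited r (hs2 a r hr)
        simp only [hg, dif_pos h]
        exact h.choose_spec
      obtain ⟨_, hrun⟩ := (red_arr s T M).mp hred
      obtain ⟨i, m, Q, hm, hQ, hev⟩ := hrun (fun a => (s a).map g) (fun _ => [])
        (fun a => forall₂_map_red g (s a) (hgood a))
      exact ⟨_, _, i, hev⟩
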